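/- Suppose α is an allowed elementary (n+1)-path, γ an allowed elementary n-path, and β an allowed elementary (n−1)-path in a digraph G with β < γ < α. Then either (a) there exists an allowed elementary n-path γ' ≠ γ with β < γ' < α, or (b) β is obtained from α = v_0 v_1 ⋯ v_{n+1} by removing two consecutive vertices v_i and v_{i+1} for some 0 ≤ i ≤ n. -/

import Mathlib

/-- A digraph: a vertex set together with an irreflexive edge relation supported on the
vertex set (edges are ordered pairs off the diagonal). -/
structure DiGraph (V : Type) where
  verts : Set V
  Edge : V → V → Prop
  edge_mem_left : ∀ u v, Edge u v → u ∈ verts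
  edge_mem_right : ∀ u v, Edge u v → v ∈ verts
  edge_ne : ∀ u v, Edge u v → u ≠ v

variable {V : Type}

/-- An allowed elementary path: a nonempty list of vertices of `G` such that each
consecutive pair is a directed edge of `G`. -/
def IsAllowed (G : DiGraph V) (p : List V) : Prop :=
  p ≠ [] ∧ (∀ v ∈ p, v ∈ G.verts) ∧ p.Chain' G.Edge

/-- `Del p q` : `p` is obtained from `q` by deleting one vertex. -/
def Del (p q : List V) : Prop := ∃ i < q.length, p = q.eraseIdx i

/-- Value of a function on vertices extended to a path: the sum over its vertices. -/
def fval (f : V → ℝ) (p : List V) : ℝ := (p.map f).sum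

/-- A discrete Morse function on a digraph `G`: a nonnegative function on vertices such
that for every allowed elementary path `p` there is (i) at most one allowed elementary
path obtained from `p` by deleting one vertex with the same `f`-value, and (ii) at most
one allowed elementary path obtained from `p` by inserting one vertex with the same
`f`-value. -/
def IsMorse (G : DiGraph V) (f : V → ℝ) : Prop :=
  (∀ v, 0 ≤ f v) ∧
  ∀ p, IsAllowed G p →
    ((∀ β β', IsAllowed G β → Del β p → fval f β = fval f p →
        IsAllowed G β' → Del β' p → fval f β' = fval f p → β = β') ∧
     (∀ α α', IsAllowed G α → Del p α → fval f α = fval f p →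
        IsAllowed G α' → Del p α' → fval f α' = fval f p → α = α'))

/-- An allowed elementary path is critical if no allowed path obtained by deleting one
vertex has the same `f`-value, and no allowed path obtained by inserting one vertex has
the same `f`-value. -/
def IsCritical (G : DiGraph V) (f : V → ℝ) (p : List V) : Prop :=
  (¬ ∃ β, IsAllowed G β ∧ Del β p ∧ fval f β = fval f p) ∧
  (¬ ∃ α, IsAllowed G α ∧ Del p α ∧ fval f α = fval f p)

/-- A directed loop: an allowed elementary path `v₀ v₁ ⋯ vₙ v₀` with `n ≥ 1`. -/
def IsLoop (G : DiGraph V) (p : List V) : Prop :=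
  IsAllowed G p ∧ 3 ≤ p.length ∧ p.head? = p.getLast?

/-- A simplicial allowed elementary path: all vertices distinct. -/
def Simplicial (G : DiGraph V) (p : List V) : Prop := IsAllowed G p ∧ p.Nodup

/-- A pair of the combinatorial discrete gradient vector field `M(G,f)`:
`β` is obtained from `α` by inserting one vertex, and `f(α) = f(β)`. -/
def MPair (G : DiGraph V) (f : V → ℝ) (α β : List V) : Prop :=
  IsAllowed G α ∧ IsAllowed G β ∧ Del α β ∧ fval f α = fval f β

/-- `H` is a sub-digraph of `G`. -/
def Subdigraph (H G : DiGraph V) : Prop :=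
  H.verts ⊆ G.verts ∧ ∀ u v, H.Edge u v → G.Edge u v


lemma eraseIdx_eraseIdx_comm {α : Type} (a : List α) (i j : ℕ) (hij : i ≤ j)
    (hj : j + 1 < a.length) :
    (a.eraseIdx i).eraseIdx j = (a.eraseIdx (j+1)).eraseIdx i := by
  have h1 : (a.eraseIdx i).length = a.length - 1 := by
    rw [List.length_eraseIdx, if_pos (show i < a.length by omega)]
  have h2 : (a.eraseIdx (j+1)).length = a.length - 1 := by
    rw [List.length_eraseIdx, if_pos (show j + 1 < a.length by omega)]
  have h3 : ((a.eraseIdx i).eraseIdx j).length = a.length - 2 := by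
    rw [List.length_eraseIdx, h1, if_pos (show j < a.length - 1 by omega)]; omega
  have h4 : ((a.eraseIdx (j+1)).eraseIdx i).length = a.length - 2 := by
    rw [List.length_eraseIdx, h2, if_pos (show i < a.length - 1 by omega)]; omega
  apply List.ext_getElem (by omega)
  intro k hk1 hk2
  rw [h3] at hk1; rw [h4] at hk2
  simp only [List.getElem_eraseIdx]
  split_ifs <;> (try rw [dif_pos (by omega)]) <;> (try rw [dif_neg (by omega)]) <;>
    (try rw [dif_pos (by omega)]) <;> (try rw [dif_neg (by omega)]) <;> first | rfl | omega

lemma chain'_eraseIdx_mid {α : Type} (R : α → α → Prop) (a : List α) (p m : ℕ) (hpm : p ≤ m)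
    (hq : m + 2 < a.length) (hca : a.Chain' R)
    (hcb : ((a.eraseIdx p).eraseIdx (m+1)).Chain' R) :
    (a.eraseIdx (m+2)).Chain' R := by
  have hla : (a.eraseIdx (m+2)).length = a.length - 1 := by
    rw [List.length_eraseIdx, if_pos hq]
  have hlp : (a.eraseIdx p).length = a.length - 1 := by
    rw [List.length_eraseIdx, if_pos (by omega)]
  simp only [List.Chain', List.isChain_iff_getElem] at hca hcb ⊢
  intro k hk
  rw [hla] at hk
  simp only [List.get_eq_getElem, List.getElem_eraseIdx]
  by_cases h1 : k + 1 < m + 2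
  · rw [dif_pos (by omega), dif_pos h1]
    simpa using hca k (by omega)
  by_cases h2 : k < m + 2
  · have hk' : k = m + 1 := by omega
    subst hk'
    rw [dif_pos h2, dif_neg h1]
    have := hcb m (by rw [List.length_eraseIdx, hlp, if_pos (by omega)]; omega)
    simp only [List.get_eq_getElem, List.getElem_eraseIdx] at this
    rw [dif_pos (show m < m+1 by omega), dif_neg (show ¬ m+1 < m+1 by omega),
        dif_neg (show ¬ m < p by omega), dif_neg (show ¬ m+1+1 < p by omega)] at this
    exact this
  · rw [dif_neg h2, dif_neg h1]
    simpa using hca (k+1) (by omega)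

lemma chain'_eraseIdx_lo {α : Type} (R : α → α → Prop) (a : List α) (p m : ℕ) (hpm : p ≤ m)
    (hq : m + 2 < a.length) (hca : a.Chain' R)
    (hcb : ((a.eraseIdx p).eraseIdx (m+1)).Chain' R) :
    (a.eraseIdx p).Chain' R := by
  have hlp : (a.eraseIdx p).length = a.length - 1 := by
    rw [List.length_eraseIdx, if_pos (by omega)]
  simp only [List.Chain', List.isChain_iff_getElem] at hca hcb ⊢
  intro k hk
  rw [hlp] at hk
  simp only [List.get_eq_getElem, List.getElem_eraseIdx]
  by_cases h1 : k + 1 < p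
  · rw [dif_pos (by omega), dif_pos h1]
    simpa using hca k (by omega)
  by_cases h2 : k < p
  · have hk' : k + 1 = p := by omega
    rw [dif_pos h2, dif_neg h1]
    have := hcb k (by rw [List.length_eraseIdx, hlp, if_pos (by omega)]; omega)
    simp only [List.get_eq_getElem, List.getElem_eraseIdx] at this
    rw [dif_pos (show k < m+1 by omega), dif_pos (show k+1 < m+1 by omega),
        dif_pos (show k < p by omega), dif_neg (show ¬ k+1 < p by omega)] at this
    exact this
  · rw [dif_neg h2, dif_neg h1]
    simpa using hca (k+1) (by omega)

lemma eraseIdx_ne_eraseIdx {α : Type} (R : α → α → Prop) (hR : ∀ x y, R x y → x ≠ y)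
    (a : List α) (hca : a.Chain' R) (p q : ℕ) (hpq : p < q) (hq : q < a.length) :
    a.eraseIdx p ≠ a.eraseIdx q := by
  intro h
  have hl : (a.eraseIdx p).length = a.length - 1 := by
    rw [List.length_eraseIdx, if_pos (by omega)]
  have hp : p < (a.eraseIdx p).length := by omega
  have h1 : (a.eraseIdx p)[p] = a[p+1] := by
    rw [List.getElem_eraseIdx, dif_neg (by omega)]
  have h2 : (a.eraseIdx q)[p]'(h ▸ hp) = a[p] := by
    rw [List.getElem_eraseIdx, dif_pos hpq]
  have h3 : a[p+1] = a[p] := by rw [← h1, ← h2]; exact List.getElem_of_eq h hp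
  have h4 := hca
  simp only [List.Chain', List.isChain_iff_getElem] at h4
  have := h4 p (by omega)
  exact hR _ _ this (by rw [h3])

/-- If `α > γ > β` are allowed elementary paths in a digraph `G`
(each obtained from the next by deleting one vertex), of dimensions `n+1`, `n`, `n−1`,
then either there is an allowed elementary `n`-path `γ' ≠ γ` with `β < γ' < α`, or `β`
is obtained from `α = v₀⋯v_{n+1}` by removing two consecutive vertices `vᵢ, v_{i+1}`
for some `0 ≤ i ≤ n`. -/
theorem exists_other_middle_or_consecutive (G : DiGraph V) (n : ℕ) (hn : 1 ≤ n)
    (a g b : List V)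
    (ha : IsAllowed G a) (hg : IsAllowed G g) (hb : IsAllowed G b)
    (hlen : a.length = n + 2)
    (hga : Del g a) (hbg : Del b g) :
    (∃ g', IsAllowed G g' ∧ g' ≠ g ∧ Del g' a ∧ Del b g') ∨
    (∃ i ≤ n, b = (a.eraseIdx i).eraseIdx i) := by

  obtain ⟨i, hi, hgi⟩ := hga
  obtain ⟨j, hj, hbj⟩ := hbg
  have hlg : g.length = n + 1 := by
    rw [hgi, List.length_eraseIdx, if_pos hi]; omega
  rw [hlg] at hj
  rw [hlen] at hi
  by_cases hij : i ≤ j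
  · by_cases heq : i = j
    · exact Or.inr ⟨i, by omega, by rw [hbj, hgi, heq]⟩
    · -- i < j, removed positions in a are i and j+1
      left
      have hcomm : (a.eraseIdx i).eraseIdx j = (a.eraseIdx (j+1)).eraseIdx i :=
        eraseIdx_eraseIdx_comm a i j hij (by omega)
      refine ⟨a.eraseIdx (j+1), ⟨?_, ?_, ?_⟩, ?_, ⟨j+1, by omega, rfl⟩, ⟨i, ?_, ?_⟩⟩
      · have : (a.eraseIdx (j+1)).length = n + 1 := by
          rw [List.length_eraseIdx, if_pos (by omega)]; omega
        intro hnil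
        rw [hnil] at this
        simp at this
      · intro v hv
        exact ha.2.1 v ((List.eraseIdx_sublist a (j+1)).subset hv)
      · have hb' : ((a.eraseIdx i).eraseIdx (j-1+1)).Chain' G.Edge := by
          rw [show j - 1 + 1 = j by omega, ← hgi, ← hbj]
          exact hb.2.2
        have := chain'_eraseIdx_mid G.Edge a i (j-1) (by omega) (by omega) ha.2.2 hb'
        rwa [show j - 1 + 2 = j + 1 by omega] at this
      · rw [hgi]
        exact (eraseIdx_ne_eraseIdx G.Edge G.edge_ne a ha.2.2 i (j+1) (by omega)
          (by omega)).symm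
      · rw [List.length_eraseIdx, if_pos (by omega)]; omega
      · rw [hbj, hgi, hcomm]
  · -- j < i : removed positions in a are j and i
    by_cases heq : i = j + 1
    · refine Or.inr ⟨j, by omega, ?_⟩
      rw [hbj, hgi, heq, ← eraseIdx_eraseIdx_comm a j j le_rfl (by omega)]
    · -- j + 2 ≤ i
      left
      have hcomm : (a.eraseIdx j).eraseIdx (i-1) = (a.eraseIdx i).eraseIdx j := by
        have := eraseIdx_eraseIdx_comm a j (i-1) (by omega) (by omega)
        rwa [show i - 1 + 1 = i by omega] at this
      refine ⟨a.eraseIdx j, ⟨?_, ?_, ?_⟩, ?_, ⟨j, by omega, rfl⟩, ⟨i-1, ?_, ?_⟩⟩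
      · have : (a.eraseIdx j).length = n + 1 := by
          rw [List.length_eraseIdx, if_pos (by omega)]; omega
        intro hnil
        rw [hnil] at this
        simp at this
      · intro v hv
        exact ha.2.1 v ((List.eraseIdx_sublist a j).subset hv)
      · have hb' : ((a.eraseIdx j).eraseIdx (i-2+1)).Chain' G.Edge := by
          rw [show i - 2 + 1 = i - 1 by omega, hcomm, ← hgi, ← hbj]
          exact hb.2.2
        exact chain'_eraseIdx_lo G.Edge a j (i-2) (by omega) (by omega) ha.2.2 hb'
      · rw [hgi]
        exact eraseIdx_ne_eraseIdx G.Edge G.edge_ne a ha.2.2 j i (by omega) (by omega)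
      · rw [List.length_eraseIdx, if_pos (by omega)]; omega
      · rw [hbj, hgi, ← hcomm]
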